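/- For every real d with (47 − 5√57)/24 ≤ d < 1 there exist a constant K > 0 and n₀ such that for all even n ≥ n₀ there exists a family ℱ of 3-element subsets of an n-element vertex set X with δ(ℱ) ≥ d·C(n,2) and |∂ℱ| ≤ (1/2 + √((4d − 1)/12))·C(n,2) + K·n. -/

import Mathlib

private lemma modHelper (m u c : ℕ) (hm : 0 < m) (hc : c < m) :
    (m + (u + c) % m - u % m) % m = c := by
  have h1 : (u + c) % m = (u % m + c) % m := by
    conv_lhs => rw [Nat.add_mod, Nat.mod_eq_of_lt hc]
  set ρ := u % m with hρ
  have hρm : ρ < m := Nat.mod_lt _ hm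
  rw [h1]
  rcases lt_or_ge (ρ + c) m with h | h
  · rw [Nat.mod_eq_of_lt h]
    have h2 : m + (ρ + c) - ρ = m + c := by omega
    rw [h2, Nat.add_mod_left, Nat.mod_eq_of_lt hc]
  · have h2 : (ρ + c) % m = ρ + c - m := by
      rw [Nat.mod_eq_sub_mod h, Nat.mod_eq_of_lt (by omega)]
    rw [h2]
    have h3 : m + (ρ + c - m) - ρ = c := by
      omega
    rw [h3, Nat.mod_eq_of_lt hc]

set_option maxHeartbeats 1000000 in
theorem shadow_min_degree_large_d_tight (d : ℝ)
    (hd1 : (47 - 5 * Real.sqrt 57) / 24 ≤ d) (hd2 : d < 1) :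
    ∃ K : ℝ, 0 < K ∧ ∃ n₀ : ℕ, ∀ n : ℕ, n₀ ≤ n → Even n →
      ∃ ℱ : Finset (Finset (Fin n)),
        (∀ F ∈ ℱ, F.card = 3) ∧
        (∀ x : Fin n, d * ((n : ℝ) * ((n : ℝ) - 1) / 2)
            ≤ (((ℱ.filter (fun F => x ∈ F)).card : ℝ))) ∧
        ((Finset.shadow ℱ).card : ℝ)
          ≤ (1 / 2 + Real.sqrt ((4 * d - 1) / 12)) * ((n : ℝ) * ((n : ℝ) - 1) / 2)
            + K * n := by
  classical
  have h57 : Real.sqrt 57 ≤ 7.6 := by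
    rw [show (7.6 : ℝ) = Real.sqrt (7.6 ^ 2) by
      rw [Real.sqrt_sq (by norm_num)]]
    exact Real.sqrt_le_sqrt (by norm_num)
  have hd37 : (37 : ℝ) / 100 ≤ d := by linarith
  set s := Real.sqrt ((4 * d - 1) / 12) with hs_def
  have harg : (0 : ℝ) ≤ (4 * d - 1) / 12 := by linarith
  have hs2 : s ^ 2 = (4 * d - 1) / 12 := Real.sq_sqrt harg
  have hs0 : 0 ≤ s := Real.sqrt_nonneg _
  have hd_eq : d = 3 * s ^ 2 + 1 / 4 := by rw [hs2]; ring
  have hs5 : 1 / 5 ≤ s := by nlinarith [hs2, hs0, hd37]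
  have hs12 : s < 1 / 2 := by nlinarith [hs2, hs0, hd2]
  have h12s : 0 < 1 - 2 * s := by linarith
  refine ⟨2, by norm_num, 2 * (⌈(3 : ℝ) / (1 - 2 * s)⌉₊ + 3), ?_⟩
  intro n hn hne
  obtain ⟨m, hm⟩ := hne
  have hm_lb : ⌈(3 : ℝ) / (1 - 2 * s)⌉₊ + 3 ≤ m := by omega
  have hm3 : 3 ≤ m := by omega
  have hm0 : 0 < m := by omega
  have hmR3 : (3 : ℝ) ≤ (m : ℝ) := by exact_mod_cast hm3
  have hmR : (3 : ℝ) / (1 - 2 * s) ≤ (m : ℝ) := by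
    calc (3 : ℝ) / (1 - 2 * s) ≤ (⌈(3 : ℝ) / (1 - 2 * s)⌉₊ : ℝ) := Nat.le_ceil _
    _ ≤ (m : ℝ) := by exact_mod_cast Nat.le_of_lt_succ (by omega)
  have hmQ : 2 * s * (m : ℝ) + 3 ≤ (m : ℝ) := by
    have h3 : (3 : ℝ) ≤ (1 - 2 * s) * m := by
      rw [div_le_iff₀ h12s] at hmR; linarith
    nlinarith
  set k := ⌈2 * s * (m : ℝ)⌉₊ + 2 with hk_def
  have hk_lbR : 2 * s * (m : ℝ) + 2 ≤ (k : ℝ) := by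
    have := Nat.le_ceil (2 * s * (m : ℝ)); rw [hk_def]; push_cast; linarith
  have hk_ubR : (k : ℝ) ≤ 2 * s * (m : ℝ) + 3 := by
    have := Nat.ceil_lt_add_one (show (0:ℝ) ≤ 2 * s * (m : ℝ) by positivity)
    rw [hk_def]; push_cast; linarith
  have hkm : k ≤ m := by exact_mod_cast le_trans hk_ubR hmQ
  have hnR : (n : ℝ) = 2 * (m : ℝ) := by rw [hm]; push_cast; ring
  -- the family
  set ℱ : Finset (Finset (Fin n)) :=
    (Finset.univ.powersetCard 3).filter
      (fun F => ∀ a ∈ F, ∀ b ∈ F, a.val < m → m ≤ b.val → (b.val - a.val) % m < k)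
    with hF_def
  have hcard3 : ∀ F ∈ ℱ, F.card = 3 := fun F hF =>
    Finset.mem_powersetCard_univ.mp (Finset.mem_filter.mp hF).1
  set A : Finset (Fin n) := (Finset.range m).attachFin (fun j hj => by
      rw [Finset.mem_range] at hj; omega) with hA_def
  set B : Finset (Fin n) := (Finset.Ico m n).attachFin
      (fun j hj => (Finset.mem_Ico.mp hj).2) with hB_def
  have hAcard : A.card = m := by
    rw [hA_def, Finset.card_attachFin, Finset.card_range]
  have hBcard : B.card = m := by
    rw [hB_def, Finset.card_attachFin, Nat.card_Ico]; omega
  have hmemA : ∀ v : Fin n, v ∈ A ↔ v.val < m := fun v => by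
    rw [hA_def, Finset.mem_attachFin, Finset.mem_range]
  have hmemB : ∀ v : Fin n, v ∈ B ↔ m ≤ v.val := fun v => by
    rw [hB_def, Finset.mem_attachFin, Finset.mem_Ico]
    exact ⟨fun h => h.1, fun h => ⟨h, v.isLt⟩⟩
  refine ⟨ℱ, hcard3, ?_, ?_⟩
  · -- degree bound

    intro x
    have hcard_triple : ∀ u v w : Fin n, u ≠ v → u ≠ w → v ≠ w →
        ({u, v, w} : Finset (Fin n)).card = 3 := by
      intro u v w h1 h2 h3
      rw [Finset.card_insert_of_notMem (by simp [h1, h2]),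
        Finset.card_insert_of_notMem (by simp [h3]), Finset.card_singleton]
    have hmemℱ : ∀ F : Finset (Fin n), F.card = 3 →
        (∀ a ∈ F, ∀ b ∈ F, a.val < m → m ≤ b.val → (b.val - a.val) % m < k) → F ∈ ℱ :=
      fun F h1 h2 => Finset.mem_filter.mpr ⟨Finset.mem_powersetCard_univ.mpr h1, h2⟩
    have hk1 : 1 ≤ k := by omega
    have hdegA : ∀ x : Fin n, x.val < m →
        d * ((n : ℝ) * ((n : ℝ) - 1) / 2) ≤ ((ℱ.filter (fun F => x ∈ F)).card : ℝ) := by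
      clear x
      intro x hx
      have hbblt : ∀ r : ℕ, m + (x.val + r) % m < n := fun r => by
        have := Nat.mod_lt (x.val + r) hm0; omega
      have haalt : ∀ r t : ℕ, (x.val + r + m - t) % m < n := fun r t => by
        have := Nat.mod_lt (x.val + r + m - t) hm0; omega
      set bb : ℕ → Fin n := fun r => ⟨m + (x.val + r) % m, hbblt r⟩ with hbb_def
      set aa : ℕ → ℕ → Fin n := fun r t => ⟨(x.val + r + m - t) % m, haalt r t⟩ with haa_def
      have hbbval : ∀ r, (bb r).val = m + (x.val + r) % m := fun r => rfl
      have haaval : ∀ r t, (aa r t).val = (x.val + r + m - t) % m := fun r t => rfl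
      have hbbge : ∀ r, m ≤ (bb r).val := fun r => Nat.le_add_right m _
      have haaltm : ∀ r t, (aa r t).val < m := fun r t => Nat.mod_lt _ hm0
      have hExb : ∀ r, r < k → ((bb r).val - x.val) % m = r := by
        intro r hr
        have hrm : r < m := lt_of_lt_of_le hr hkm
        have h := modHelper m x.val r hm0 hrm
        rw [Nat.mod_eq_of_lt hx] at h
        exact h
      have hEab : ∀ r t, t < k → ((bb r).val - (aa r t).val) % m = t := by
        intro r t ht
        have htm : t < m := lt_of_lt_of_le ht hkm
        have h := modHelper m (x.val + r + m - t) t hm0 htm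
        have e1 : x.val + r + m - t + t = x.val + r + m := by omega
        rw [e1, Nat.add_mod_right] at h
        exact h
      have hbb_inj : ∀ r r', r < k → r' < k → bb r = bb r' → r = r' := by
        intro r r' hr hr' h
        have hval : m + (x.val + r) % m = m + (x.val + r') % m := congrArg Fin.val h
        have h2 : (x.val + r) % m = (x.val + r') % m := by omega
        have h3 : r % m = r' % m := Nat.ModEq.add_left_cancel' x.val h2
        rw [Nat.mod_eq_of_lt (lt_of_lt_of_le hr hkm),
          Nat.mod_eq_of_lt (lt_of_lt_of_le hr' hkm)] at h3
        exact h3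
      have haax : ∀ r t, r < k → t < k → r ≠ t → aa r t ≠ x := by
        intro r t hr ht hrt h
        have hval : (x.val + r + m - t) % m = x.val := congrArg Fin.val h
        have h2 : (x.val + r + m - t) % m = x.val % m := by
          rw [hval, Nat.mod_eq_of_lt hx]
        have h3 : Nat.ModEq m (x.val + r + m - t) x.val := h2
        have h4 := h3.add_right t
        have e1 : x.val + r + m - t + t = x.val + r + m := by omega
        rw [e1] at h4
        have h5 : Nat.ModEq m (x.val + r) (x.val + t) := by
          have e2 : (x.val + r + m) % m = (x.val + r) % m := Nat.add_mod_right _ _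
          have h4' : (x.val + r + m) % m = (x.val + t) % m := h4
          rw [e2] at h4'
          exact h4'
        have h6 : r % m = t % m := Nat.ModEq.add_left_cancel' x.val h5
        rw [Nat.mod_eq_of_lt (lt_of_lt_of_le hr hkm),
          Nat.mod_eq_of_lt (lt_of_lt_of_le ht hkm)] at h6
        exact hrt h6
      have haa_inj : ∀ r t t', t < k → t' < k → aa r t = aa r t' → t = t' := by
        intro r t t' ht ht' h
        have hval : (x.val + r + m - t) % m = (x.val + r + m - t') % m := congrArg Fin.val h
        have h3 : Nat.ModEq m (x.val + r + m - t) (x.val + r + m - t') := hval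
        have h4 := h3.add_right t
        have e1 : x.val + r + m - t + t = x.val + r + m := by omega
        rw [e1] at h4
        have h5 : Nat.ModEq m (x.val + r + m - t' + t') (x.val + r + m - t' + t) := by
          have e2 : x.val + r + m - t' + t' = x.val + r + m := by omega
          rw [e2]; exact h4
        have h6 : t' % m = t % m := Nat.ModEq.add_left_cancel' _ h5
        rw [Nat.mod_eq_of_lt (lt_of_lt_of_le ht' hkm),
          Nat.mod_eq_of_lt (lt_of_lt_of_le ht hkm)] at h6
        exact h6.symm
      set S1 : Finset (Finset (Fin n)) :=
        ((A.erase x).powersetCard 2).image (fun p => insert x p) with hS1_def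
      set D2 := (Finset.range k).offDiag with hD2_def
      set S2 : Finset (Finset (Fin n)) :=
        D2.image (fun p => ({x, aa p.1 p.2, bb p.1} : Finset (Fin n))) with hS2_def
      set D3 := (Finset.range k).sigma (fun r => Finset.range r) with hD3_def
      set S3 : Finset (Finset (Fin n)) :=
        D3.image (fun p => ({x, bb p.1, bb p.2} : Finset (Fin n))) with hS3_def
      have hS1sub : S1 ⊆ ℱ.filter (fun F => x ∈ F) := by
        intro F hF
        rw [hS1_def, Finset.mem_image] at hF
        obtain ⟨p, hp, rfl⟩ := hF
        rw [Finset.mem_powersetCard] at hp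
        obtain ⟨hpsub, hp2⟩ := hp
        have hxp : x ∉ p := fun hxp => (Finset.mem_erase.mp (hpsub hxp)).1 rfl
        refine Finset.mem_filter.mpr ⟨hmemℱ _ ?_ ?_, Finset.mem_insert_self x p⟩
        · rw [Finset.card_insert_of_notMem hxp, hp2]
        · intro a ha b hb h1 h2
          rcases Finset.mem_insert.mp hb with rfl | hbp
          · omega
          · have hbA : b ∈ A := Finset.mem_of_mem_erase (hpsub hbp)
            rw [hmemA b] at hbA; omega
      have hS2sub : S2 ⊆ ℱ.filter (fun F => x ∈ F) := by
        intro F hF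
        rw [hS2_def, Finset.mem_image] at hF
        obtain ⟨p, hp, rfl⟩ := hF
        rw [hD2_def, Finset.mem_offDiag] at hp
        obtain ⟨hp1, hp2, hp12⟩ := hp
        rw [Finset.mem_range] at hp1 hp2
        have hne1 : x ≠ aa p.1 p.2 := fun h => haax p.1 p.2 hp1 hp2 hp12 h.symm
        have hne2 : x ≠ bb p.1 := fun h => by
          have h' := congrArg Fin.val h; have := hbbge p.1; omega
        have hne3 : aa p.1 p.2 ≠ bb p.1 := fun h => by
          have h' := congrArg Fin.val h
          have := hbbge p.1; have := haaltm p.1 p.2; omega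
        refine Finset.mem_filter.mpr
          ⟨hmemℱ _ (hcard_triple _ _ _ hne1 hne2 hne3) ?_, Finset.mem_insert_self _ _⟩
        intro u hu v hv h1 h2
        simp only [Finset.mem_insert, Finset.mem_singleton] at hu hv
        have hvlt := haaltm p.1 p.2
        have hblt := hbbge p.1
        rcases hv with rfl | rfl | rfl
        · omega
        · omega
        · rcases hu with rfl | rfl | rfl
          · rw [hExb p.1 hp1]; exact hp1
          · rw [hEab p.1 p.2 hp2]; exact hp2
          · omega
      have hS3sub : S3 ⊆ ℱ.filter (fun F => x ∈ F) := by
        intro F hF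
        rw [hS3_def, Finset.mem_image] at hF
        obtain ⟨p, hp, rfl⟩ := hF
        rw [hD3_def, Finset.mem_sigma] at hp
        obtain ⟨hp1, hp2⟩ := hp
        rw [Finset.mem_range] at hp1 hp2
        have hp2k : p.2 < k := lt_trans hp2 hp1
        have hne2 : x ≠ bb p.1 := fun h => by
          have h' := congrArg Fin.val h; have := hbbge p.1; omega
        have hne2' : x ≠ bb p.2 := fun h => by
          have h' := congrArg Fin.val h; have := hbbge p.2; omega
        have hne3 : bb p.1 ≠ bb p.2 := fun h => by
          have := hbb_inj p.1 p.2 hp1 hp2k h; omega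
        refine Finset.mem_filter.mpr
          ⟨hmemℱ _ (hcard_triple _ _ _ hne2 hne2' hne3) ?_, Finset.mem_insert_self _ _⟩
        intro u hu v hv h1 h2
        simp only [Finset.mem_insert, Finset.mem_singleton] at hu hv
        have hb1 := hbbge p.1
        have hb2 := hbbge p.2
        rcases hv with rfl | rfl | rfl
        · omega
        · rcases hu with rfl | rfl | rfl
          · rw [hExb p.1 hp1]; exact hp1
          · omega
          · omega
        · rcases hu with rfl | rfl | rfl
          · rw [hExb p.2 hp2k]; exact hp2k
          · omega
          · omega
      have hd12 : Disjoint S1 S2 := by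
        rw [Finset.disjoint_left]
        intro F hF1 hF2
        rw [hS1_def, Finset.mem_image] at hF1
        rw [hS2_def, Finset.mem_image] at hF2
        obtain ⟨p, hp, rfl⟩ := hF1
        obtain ⟨q, hq, heq⟩ := hF2
        rw [Finset.mem_powersetCard] at hp
        have hmem : bb q.1 ∈ insert x p := by
          rw [← heq]; simp
        rcases Finset.mem_insert.mp hmem with h | h
        · have h' := congrArg Fin.val h; have := hbbge q.1; omega
        · have hA' := Finset.mem_of_mem_erase (hp.1 h)
          rw [hmemA _] at hA'
          have := hbbge q.1; omega
      have hd13 : Disjoint S1 S3 := by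
        rw [Finset.disjoint_left]
        intro F hF1 hF2
        rw [hS1_def, Finset.mem_image] at hF1
        rw [hS3_def, Finset.mem_image] at hF2
        obtain ⟨p, hp, rfl⟩ := hF1
        obtain ⟨q, hq, heq⟩ := hF2
        rw [Finset.mem_powersetCard] at hp
        have hmem : bb q.1 ∈ insert x p := by
          rw [← heq]; simp
        rcases Finset.mem_insert.mp hmem with h | h
        · have h' := congrArg Fin.val h; have := hbbge q.1; omega
        · have hA' := Finset.mem_of_mem_erase (hp.1 h)
          rw [hmemA _] at hA'
          have := hbbge q.1; omega
      have hd23 : Disjoint S2 S3 := by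
        rw [Finset.disjoint_left]
        intro F hF1 hF2
        rw [hS2_def, Finset.mem_image] at hF1
        rw [hS3_def, Finset.mem_image] at hF2
        obtain ⟨p, hp, rfl⟩ := hF1
        obtain ⟨q, hq, heq⟩ := hF2
        rw [hD2_def, Finset.mem_offDiag] at hp
        rw [hD3_def, Finset.mem_sigma] at hq
        obtain ⟨hp1, hp2, hp12⟩ := hp
        rw [Finset.mem_range] at hp1 hp2
        obtain ⟨hq1, hq2⟩ := hq
        rw [Finset.mem_range] at hq1 hq2
        have hq2k : q.2 < k := lt_trans hq2 hq1
        have h1 : bb q.1 ∈ ({x, aa p.1 p.2, bb p.1} : Finset (Fin n)) := by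
          rw [← heq]; simp
        have h2 : bb q.2 ∈ ({x, aa p.1 p.2, bb p.1} : Finset (Fin n)) := by
          rw [← heq]; simp
        simp only [Finset.mem_insert, Finset.mem_singleton] at h1 h2
        have hv1 := hbbge q.1
        have hv2 := hbbge q.2
        have hva := haaltm p.1 p.2
        rcases h1 with h1 | h1 | h1
        · have := congrArg Fin.val h1; omega
        · have := congrArg Fin.val h1; omega
        · rcases h2 with h2 | h2 | h2
          · have := congrArg Fin.val h2; omega
          · have := congrArg Fin.val h2; omega
          · have := hbb_inj q.1 q.2 hq1 hq2k (h1.trans h2.symm); omega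
      have hinj1 : Set.InjOn (fun p => insert x p) (((A.erase x).powersetCard 2 : Finset (Finset (Fin n))) : Set (Finset (Fin n))) := by
        intro p hp q hq h
        dsimp only at h
        simp only [Finset.mem_coe, Finset.mem_powersetCard] at hp hq
        have hxp : x ∉ p := fun hc => (Finset.mem_erase.mp (hp.1 hc)).1 rfl
        have hxq : x ∉ q := fun hc => (Finset.mem_erase.mp (hq.1 hc)).1 rfl
        rw [← Finset.erase_insert hxp, h, Finset.erase_insert hxq]
      have hS1card : S1.card = (m - 1).choose 2 := by
        rw [hS1_def, Finset.card_image_of_injOn hinj1, Finset.card_powersetCard,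
          Finset.card_erase_of_mem ((hmemA x).mpr hx), hAcard]
      have hinj2 : Set.InjOn (fun p : ℕ × ℕ => ({x, aa p.1 p.2, bb p.1} : Finset (Fin n)))
          (D2 : Set (ℕ × ℕ)) := by
        intro p hp q hq h
        dsimp only at h
        simp only [Finset.mem_coe, hD2_def, Finset.mem_offDiag, Finset.mem_range] at hp hq
        obtain ⟨hp1, hp2, hp12⟩ := hp
        obtain ⟨hq1, hq2, hq12⟩ := hq
        have hb : bb q.1 ∈ ({x, aa p.1 p.2, bb p.1} : Finset (Fin n)) := by
          rw [h]; simp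
        simp only [Finset.mem_insert, Finset.mem_singleton] at hb
        have hv1 := hbbge q.1
        have hva := haaltm p.1 p.2
        have hr : q.1 = p.1 := by
          rcases hb with hb | hb | hb
          · have := congrArg Fin.val hb; omega
          · have := congrArg Fin.val hb; omega
          · exact hbb_inj q.1 p.1 hq1 hp1 hb
        have ha : aa q.1 q.2 ∈ ({x, aa p.1 p.2, bb p.1} : Finset (Fin n)) := by
          rw [h]; simp
        simp only [Finset.mem_insert, Finset.mem_singleton] at ha
        have hva' := haaltm q.1 q.2
        have hvb := hbbge p.1
        have ht : q.2 = p.2 := by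
          rcases ha with ha | ha | ha
          · exact absurd ha (haax q.1 q.2 hq1 hq2 hq12)
          · rw [hr] at ha
            exact (haa_inj p.1 q.2 p.2 hq2 hp2 ha)
          · have := congrArg Fin.val ha; omega
        exact Prod.ext hr.symm ht.symm
      have hS2card : S2.card = k * k - k := by
        rw [hS2_def, Finset.card_image_of_injOn hinj2, hD2_def, Finset.offDiag_card,
          Finset.card_range]
      have hinj3 : Set.InjOn
          (fun p : (_ : ℕ) × ℕ => ({x, bb p.1, bb p.2} : Finset (Fin n))) (D3 : Set ((_ : ℕ) × ℕ)) := by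
        intro p hp q hq h
        dsimp only at h
        obtain ⟨pf, ps⟩ := p
        obtain ⟨qf, qs⟩ := q
        simp only [Finset.mem_coe, hD3_def, Finset.mem_sigma, Finset.mem_range] at hp hq
        obtain ⟨hp1, hp2⟩ := hp
        obtain ⟨hq1, hq2⟩ := hq
        have hp2k : ps < k := lt_trans hp2 hp1
        have hq2k : qs < k := lt_trans hq2 hq1
        simp only at h
        have hb1 : bb qf ∈ ({x, bb pf, bb ps} : Finset (Fin n)) := by rw [h]; simp
        have hb2 : bb qs ∈ ({x, bb pf, bb ps} : Finset (Fin n)) := by rw [h]; simp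
        simp only [Finset.mem_insert, Finset.mem_singleton] at hb1 hb2
        have hv1 := hbbge qf
        have hv2 := hbbge qs
        have hc1 : qf = pf ∨ qf = ps := by
          rcases hb1 with hb | hb | hb
          · have := congrArg Fin.val hb; omega
          · exact Or.inl (hbb_inj qf pf hq1 hp1 hb)
          · exact Or.inr (hbb_inj qf ps hq1 hp2k hb)
        have hc2 : qs = pf ∨ qs = ps := by
          rcases hb2 with hb | hb | hb
          · have := congrArg Fin.val hb; omega
          · exact Or.inl (hbb_inj qs pf hq2k hp1 hb)
          · exact Or.inr (hbb_inj qs ps hq2k hp2k hb)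
        have hfe : qf = pf ∧ qs = ps := by
          rcases hc1 with h1 | h1 <;> rcases hc2 with h2 | h2 <;> omega
        obtain ⟨h1, h2⟩ := hfe
        subst h1; subst h2; rfl
      have hS3card : S3.card = ∑ r ∈ Finset.range k, r := by
        rw [hS3_def, Finset.card_image_of_injOn hinj3, hD3_def, Finset.card_sigma]
        simp [Finset.card_range]
      have hdisj : Disjoint (S1 ∪ S2) S3 := Finset.disjoint_union_left.mpr ⟨hd13, hd23⟩
      have hsub' : S1 ∪ S2 ∪ S3 ⊆ ℱ.filter (fun F => x ∈ F) := by
        intro F hF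
        rcases Finset.mem_union.mp hF with h | h
        · rcases Finset.mem_union.mp h with h | h
          · exact hS1sub h
          · exact hS2sub h
        · exact hS3sub h
      have hcount : (m - 1).choose 2 + (k * k - k) + (∑ r ∈ Finset.range k, r)
          ≤ (ℱ.filter (fun F => x ∈ F)).card := by
        calc (m - 1).choose 2 + (k * k - k) + (∑ r ∈ Finset.range k, r)
            = (S1 ∪ S2 ∪ S3).card := by
              rw [Finset.card_union_of_disjoint hdisj, Finset.card_union_of_disjoint hd12,
                hS1card, hS2card, hS3card]
          _ ≤ _ := Finset.card_le_card hsub'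
      have hc1R : (((m - 1).choose 2 : ℕ) : ℝ) = ((m : ℝ) - 1) * ((m : ℝ) - 2) / 2 := by
        rw [Nat.cast_choose_two]
        have e : ((m - 1 : ℕ) : ℝ) = (m : ℝ) - 1 := by
          rw [Nat.cast_sub (by omega)]; norm_num
        rw [e]; ring
      have hc2R : ((k * k - k : ℕ) : ℝ) = (k : ℝ) * (k : ℝ) - (k : ℝ) := by
        rw [Nat.cast_sub (Nat.le_mul_of_pos_left k (by omega))]
        push_cast; ring
      have hc3R : ((∑ r ∈ Finset.range k, r : ℕ) : ℝ)
          = ((k : ℝ) * (k : ℝ) - (k : ℝ)) / 2 := by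
        have h2 := Finset.sum_range_id_mul_two k
        have h3 := congrArg (Nat.cast : ℕ → ℝ) h2
        push_cast [Nat.cast_sub hk1] at h3 ⊢
        linarith
      have hsm : (0 : ℝ) ≤ s * (m : ℝ) := mul_nonneg hs0 (by positivity)
      have hprod : (2 * s * (m : ℝ) + 2) * (2 * s * (m : ℝ) + 1)
          ≤ (k : ℝ) * (k : ℝ) - (k : ℝ) := by
        nlinarith [hk_lbR, hsm]
      have key : (0 : ℝ) ≤ (m : ℝ) * (9 * s + 3 * s ^ 2 - 5 / 4) :=
        mul_nonneg (by positivity) (by nlinarith [hs5, hs0])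
      have hfinal : d * ((n : ℝ) * ((n : ℝ) - 1) / 2)
          ≤ (((m - 1).choose 2 : ℕ) : ℝ) + ((k * k - k : ℕ) : ℝ)
            + ((∑ r ∈ Finset.range k, r : ℕ) : ℝ) := by
        rw [hc1R, hc2R, hc3R, hnR, hd_eq]
        nlinarith [hprod, key]
      calc d * ((n : ℝ) * ((n : ℝ) - 1) / 2) ≤ _ := hfinal
        _ ≤ ((ℱ.filter (fun F => x ∈ F)).card : ℝ) := by exact_mod_cast hcount
    rcases lt_or_ge x.val m with hxm | hxm
    · exact hdegA x hxm
    · have hn0 : 0 < n := by omega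
      have hxlt := x.isLt
      set ρ : Fin n → Fin n := fun v => ⟨n - 1 - v.val, by omega⟩ with hρ_def
      have hρval : ∀ v : Fin n, (ρ v).val = n - 1 - v.val := fun v => rfl
      set y : Fin n := ρ x with hy_def
      have hy : y.val < m := by rw [hy_def, hρval]; omega
      have hρinj : Function.Injective ρ := by
        intro u v h
        have h1 := congrArg Fin.val h
        rw [hρval, hρval] at h1
        have hu := u.isLt; have hv := v.isLt
        exact Fin.ext (by omega)
      have hρmem : ∀ F : Finset (Fin n), F ∈ ℱ → F.image ρ ∈ ℱ := by
        intro F hF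
        obtain ⟨hF3, hFP⟩ := Finset.mem_filter.mp hF
        refine Finset.mem_filter.mpr ⟨?_, ?_⟩
        · rw [Finset.mem_powersetCard_univ, Finset.card_image_of_injective _ hρinj]
          exact Finset.mem_powersetCard_univ.mp hF3
        · intro a ha b hb h1 h2
          obtain ⟨a₀, ha₀, rfl⟩ := Finset.mem_image.mp ha
          obtain ⟨b₀, hb₀, rfl⟩ := Finset.mem_image.mp hb
          rw [hρval] at h1 h2
          have ha0 := a₀.isLt; have hb0 := b₀.isLt
          have h1' : m ≤ a₀.val := by omega
          have h2' : b₀.val < m := by omega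
          have hE := hFP b₀ hb₀ a₀ ha₀ h2' h1'
          have e : (ρ b₀).val - (ρ a₀).val = a₀.val - b₀.val := by
            rw [hρval, hρval]; omega
          rw [e]; exact hE
      have himg : ∀ H : Finset (Fin n), (H.image ρ).image ρ = H := by
        intro H
        rw [Finset.image_image]
        have hid : ρ ∘ ρ = id := by
          funext v
          have hv := v.isLt
          exact Fin.ext (by simp only [Function.comp_apply, hρval, id_eq]; omega)
        rw [hid, Finset.image_id]
      have hkey : (ℱ.filter (fun F => y ∈ F)).card ≤ (ℱ.filter (fun F => x ∈ F)).card := by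
        apply Finset.card_le_card_of_injOn (fun F => F.image ρ)
        · intro F hF
          obtain ⟨hFℱ, hyF⟩ := Finset.mem_filter.mp hF
          refine Finset.mem_filter.mpr ⟨hρmem F hFℱ, ?_⟩
          rw [Finset.mem_image]
          refine ⟨y, hyF, ?_⟩
          rw [hy_def]
          exact Fin.ext (by rw [hρval, hρval]; omega)
        · intro F _ G _ h
          dsimp only at h
          have h2 := congrArg (Finset.image ρ) h
          rwa [himg, himg] at h2
      calc d * ((n : ℝ) * ((n : ℝ) - 1) / 2)
          ≤ ((ℱ.filter (fun F => y ∈ F)).card : ℝ) := hdegA y hy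
        _ ≤ _ := by exact_mod_cast hkey

  · -- shadow bound

    set QP : Finset (Finset (Fin n)) :=
      ((A ×ˢ B).filter (fun p => (p.2.val - p.1.val) % m < k)).image
        (fun p => ({p.1, p.2} : Finset (Fin n))) with hQP
    have hsub : ℱ.shadow ⊆ A.powersetCard 2 ∪ B.powersetCard 2 ∪ QP := by
      intro G hG
      obtain ⟨F, hF, a, haF, hFa⟩ := Finset.mem_shadow_iff.mp hG
      have hGsub : G ⊆ F := hFa ▸ Finset.erase_subset a F
      have hGcard : G.card = 2 := by
        have h3 := hcard3 F hF
        rw [← hFa, Finset.card_erase_of_mem haF, h3]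
      obtain ⟨u, v, huv, rfl⟩ := Finset.card_eq_two.mp hGcard
      have hu : u ∈ F := hGsub (by simp)
      have hv : v ∈ F := hGsub (by simp)
      have hP := (Finset.mem_filter.mp hF).2
      rcases lt_or_ge u.val m with hum | hum <;> rcases lt_or_ge v.val m with hvm | hvm
      · refine Finset.mem_union_left _ (Finset.mem_union_left _ ?_)
        rw [Finset.mem_powersetCard]
        refine ⟨?_, hGcard⟩
        rw [Finset.insert_subset_iff, Finset.singleton_subset_iff]
        exact ⟨(hmemA u).mpr hum, (hmemA v).mpr hvm⟩
      · refine Finset.mem_union_right _ ?_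
        rw [hQP, Finset.mem_image]
        refine ⟨(u, v), ?_, rfl⟩
        rw [Finset.mem_filter, Finset.mem_product]
        exact ⟨⟨(hmemA u).mpr hum, (hmemB v).mpr hvm⟩, hP u hu v hv hum hvm⟩
      · refine Finset.mem_union_right _ ?_
        rw [hQP, Finset.mem_image]
        refine ⟨(v, u), ?_, ?_⟩
        · rw [Finset.mem_filter, Finset.mem_product]
          exact ⟨⟨(hmemA v).mpr hvm, (hmemB u).mpr hum⟩, hP v hv u hu hvm hum⟩
        · exact Finset.pair_comm v u
      · refine Finset.mem_union_left _ (Finset.mem_union_right _ ?_)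
        rw [Finset.mem_powersetCard]
        refine ⟨?_, hGcard⟩
        rw [Finset.insert_subset_iff, Finset.singleton_subset_iff]
        exact ⟨(hmemB u).mpr hum, (hmemB v).mpr hvm⟩
    have hmodv : ∀ b : ℕ, m ≤ b → b < n → b % m = b - m := fun b h1 h2 => by
      rw [Nat.mod_eq_sub_mod h1, Nat.mod_eq_of_lt (by omega)]
    have hQPcard : QP.card ≤ m * k := by
      calc QP.card ≤ ((A ×ˢ B).filter (fun p => (p.2.val - p.1.val) % m < k)).card :=
            Finset.card_image_le
        _ ≤ ((Finset.range m) ×ˢ (Finset.range k)).card := by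
            apply Finset.card_le_card_of_injOn
              (fun p => (p.1.val, (p.2.val - p.1.val) % m))
            · intro p hp
              rw [Finset.mem_coe, Finset.mem_filter, Finset.mem_product] at hp
              rw [Finset.mem_coe, Finset.mem_product, Finset.mem_range, Finset.mem_range]
              exact ⟨(hmemA p.1).mp hp.1.1, hp.2⟩
            · intro p hp q hq h
              simp only [Finset.coe_filter, Set.mem_setOf_eq, Finset.mem_product] at hp hq
              have h1 : p.1.val = q.1.val := (Prod.mk.injEq _ _ _ _).mp h |>.1
              have h2 : (p.2.val - p.1.val) % m = (q.2.val - q.1.val) % m :=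
                (Prod.mk.injEq _ _ _ _).mp h |>.2
              have hp1 : p.1.val < m := (hmemA p.1).mp hp.1.1
              have hp2 : m ≤ p.2.val := (hmemB p.2).mp hp.1.2
              have hq2 : m ≤ q.2.val := (hmemB q.2).mp hq.1.2
              rw [← h1] at h2
              have h3 : Nat.ModEq m (p.2.val - p.1.val) (q.2.val - p.1.val) := h2
              have h4 := h3.add_right p.1.val
              rw [Nat.sub_add_cancel (by omega), Nat.sub_add_cancel (by omega)] at h4
              have h5 : p.2.val % m = q.2.val % m := h4
              rw [hmodv _ hp2 p.2.isLt, hmodv _ hq2 q.2.isLt] at h5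
              have hval1 : p.1 = q.1 := Fin.ext h1
              have hval2 : p.2 = q.2 := Fin.ext (by omega)
              exact Prod.ext hval1 hval2
        _ = m * k := by rw [Finset.card_product, Finset.card_range, Finset.card_range]
    have htot : ℱ.shadow.card ≤ m.choose 2 + m.choose 2 + m * k := by
      have c1 := Finset.card_le_card hsub
      have c2 := Finset.card_union_le (A.powersetCard 2 ∪ B.powersetCard 2) QP
      have c3 := Finset.card_union_le (A.powersetCard 2) (B.powersetCard 2)
      have c4 : (A.powersetCard 2).card = m.choose 2 := by
        rw [Finset.card_powersetCard, hAcard]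
      have c5 : (B.powersetCard 2).card = m.choose 2 := by
        rw [Finset.card_powersetCard, hBcard]
      omega
    have hkmR : (m : ℝ) * k ≤ (m : ℝ) * (2 * s * m + 3) := by
      have hm0' : (0:ℝ) ≤ (m:ℝ) := by positivity
      nlinarith [hk_ubR]
    have hfin : ((m.choose 2 : ℕ) : ℝ) + ((m.choose 2 : ℕ) : ℝ) + (m : ℝ) * k
        ≤ (1 / 2 + s) * ((n : ℝ) * ((n : ℝ) - 1) / 2) + 2 * n := by
      rw [hnR, Nat.cast_choose_two]
      have key : (0:ℝ) ≤ (m : ℝ) * (3/2 - s) :=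
        mul_nonneg (by positivity) (by linarith)
      nlinarith [hkmR, key]
    have htotR : ((ℱ.shadow.card : ℕ) : ℝ)
        ≤ ((m.choose 2 : ℕ) : ℝ) + ((m.choose 2 : ℕ) : ℝ) + (m : ℝ) * (k : ℝ) := by
      have h := (Nat.cast_le (α := ℝ)).mpr htot
      push_cast at h ⊢
      linarith
    exact le_trans htotR hfin
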